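/- Let W be a real vector space of finite dimension n, Q a positive definite quadratic form on W, and L a lattice in W (a discrete subgroup of W generated by a basis of W, equivalently a free ℤ-submodule of rank n spanning W). Then for every real number k with 2k > n, the family (1/Q(v)^k)_{v ∈ L \ {0}} is summable: ∑_{v ∈ L, v ≠ 0} Q(v)^{−k} < +∞. -/

import Mathlib

open Finset

private lemma norm_pi_int_eq (d : ℕ) (x : Fin d → ℤ) :
    ‖x‖ = ((Finset.univ.sup fun i => (x i).natAbs : ℕ) : ℝ) := by
  rw [Pi.norm_def]
  have : (Finset.univ.sup fun b => ‖x b‖₊)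
      = ((Finset.univ.sup fun i => (x i).natAbs : ℕ) : NNReal) := by
    rw [Finset.comp_sup_eq_sup_comp (fun r : ℕ => (r : NNReal))
      (fun a b => by simp [Nat.cast_max]) (by simp)]
    exact Finset.sup_congr rfl fun i _ => by simp [Function.comp, NNReal.natCast_natAbs]
  rw [this, NNReal.coe_natCast]

private lemma pow_sub_pow_le_aux {a b : ℝ} (h0 : 0 ≤ b) (hab : b ≤ a) :
    ∀ d : ℕ, a ^ d - b ^ d ≤ d * (a - b) * a ^ (d - 1)
  | 0 => by simp
  | 1 => by simp
  | (e + 2) => by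
    have ha : 0 ≤ a := h0.trans hab
    have ih := pow_sub_pow_le_aux h0 hab (e + 1)
    have h1 : (e + 1 : ℕ) - 1 = e := rfl
    rw [h1] at ih
    have hbd : b ^ (e + 1) ≤ a ^ (e + 1) := pow_le_pow_left₀ h0 hab _
    have habn : 0 ≤ a - b := sub_nonneg.mpr hab
    have step : a ^ (e+2) - b^(e+2) = a * (a^(e+1) - b^(e+1)) + (a - b) * b^(e+1) := by ring
    have h2 : a * (a^(e+1) - b^(e+1)) ≤ a * ((e+1 : ℕ) * (a-b) * a^e) :=
      mul_le_mul_of_nonneg_left ih ha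
    have h3 : (a - b) * b^(e+1) ≤ (a - b) * a^(e+1) :=
      mul_le_mul_of_nonneg_left hbd habn
    have h4 : (e + 2 : ℕ) - 1 = e + 1 := rfl
    rw [h4]
    calc a ^ (e+2) - b ^ (e+2)
        = a * (a^(e+1) - b^(e+1)) + (a - b) * b^(e+1) := step
      _ ≤ a * ((e+1 : ℕ) * (a-b) * a^e) + (a - b) * a^(e+1) := add_le_add h2 h3
      _ = ((e+2 : ℕ)) * (a - b) * a^(e+1) := by push_cast; ring

set_option maxHeartbeats 1000000 in
private lemma summable_pi_int_norm_rpow (d : ℕ) {s : ℝ} (hs : (d : ℝ) < s) :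
    Summable fun x : Fin d → ℤ => ‖x‖ ^ (-s) := by
  have hs0 : 0 < s := lt_of_le_of_lt (by positivity) hs
  rcases Nat.eq_zero_or_pos d with hd | hd
  · subst hd; exact Summable.of_finite
  have hd1 : 1 ≤ d := hd
  have hnorm : ∀ x : Fin d → ℤ,
      ‖x‖ = ((Finset.univ.sup fun i => (x i).natAbs : ℕ) : ℝ) := norm_pi_int_eq d
  set S : ℕ → Set (Fin d → ℤ) :=
    (fun m => {x | (Finset.univ.sup fun i => (x i).natAbs) = m}) with hS
  have hpart : ∀ x : Fin d → ℤ, ∃! m, x ∈ S m := fun x => ⟨_, rfl, fun m hm => hm.symm⟩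
  have hf0 : (0 : (Fin d → ℤ) → ℝ) ≤ fun x => ‖x‖ ^ (-s) :=
    fun x => Real.rpow_nonneg (norm_nonneg _) _
  -- the boxes
  set Bfin : ℕ → Finset (Fin d → ℤ) :=
    (fun r => Fintype.piFinset fun _ => Finset.Icc (-(r : ℤ)) r) with hB
  have hmemB : ∀ (r : ℕ) (x : Fin d → ℤ),
      x ∈ Bfin r ↔ (Finset.univ.sup fun i => (x i).natAbs) ≤ r := by
    intro r x
    rw [hB, Fintype.mem_piFinset]
    constructor
    · intro h
      refine Finset.sup_le fun i _ => ?_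
      have := h i
      rw [Finset.mem_Icc] at this
      omega
    · intro h i
      have hi : (x i).natAbs ≤ r :=
        le_trans (Finset.le_sup (f := fun i => (x i).natAbs) (Finset.mem_univ i)) h
      rw [Finset.mem_Icc]
      omega
  have hfin : ∀ m, (S m).Finite := by
    intro m
    apply Set.Finite.subset (Bfin m).finite_toSet
    intro x hx
    rw [Finset.mem_coe, hmemB]
    exact le_of_eq hx
  refine (summable_partition hf0 hpart).mpr
    ⟨fun m => by simpa [Function.comp_def] using (hfin m).summable fun x => ‖x‖ ^ (-s), ?_⟩
  set C : ℝ := 2 * d * 3 ^ (d - 1) with hC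
  have hC0 : 0 ≤ C := by positivity
  set t : ℝ := ((d : ℝ) - 1) - s with ht
  have ht1 : t < -1 := by rw [ht]; linarith
  have hgsum : Summable fun m : ℕ => C * (m : ℝ) ^ t :=
    (Real.summable_nat_rpow.mpr ht1).mul_left C
  refine Summable.of_nonneg_of_le (fun m => tsum_nonneg fun x => hf0 x) (fun m => ?_) hgsum
  refine Summable.tsum_le_of_sum_le
    (by simpa [Function.comp_def] using (hfin m).summable fun x => ‖x‖ ^ (-s)) fun u => ?_
  have hval : ∀ x : (S m : Set (Fin d → ℤ)), ‖(x : Fin d → ℤ)‖ ^ (-s) = (m : ℝ) ^ (-s) := by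
    intro x
    have hx : (Finset.univ.sup fun i => ((x : Fin d → ℤ) i).natAbs) = m := x.2
    rw [hnorm, hx]
  rw [Finset.sum_congr rfl fun x _ => hval x, Finset.sum_const, nsmul_eq_mul]
  rcases Nat.eq_zero_or_pos m with hm | hm
  · subst hm
    rw [Nat.cast_zero, Real.zero_rpow (by linarith), Real.zero_rpow (by linarith), mul_zero,
      mul_zero]
  -- m ≥ 1 : counting
  have hm1 : 1 ≤ m := hm
  have hBsub : Bfin (m - 1) ⊆ Bfin m := by
    intro x hx
    rw [hmemB] at hx ⊢
    omega
  have husub : u.image Subtype.val ⊆ Bfin m \ Bfin (m - 1) := by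
    intro y hy
    obtain ⟨x, _, rfl⟩ := Finset.mem_image.mp hy
    rw [Finset.mem_sdiff, hmemB, hmemB]
    have hx : (Finset.univ.sup fun i => ((x : Fin d → ℤ) i).natAbs) = m := x.2
    omega
  have hBcard : ∀ r : ℕ, (Bfin r).card = (2 * r + 1) ^ d := by
    intro r
    rw [hB, Fintype.card_piFinset]
    have h2 : ((r : ℤ) + 1 + r).toNat = 2 * r + 1 := by omega
    simp [Int.card_Icc, sub_neg_eq_add, h2]
  have hucard : u.card ≤ (2 * m + 1) ^ d - (2 * (m - 1) + 1) ^ d := by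
    calc u.card = (u.image Subtype.val).card :=
          (Finset.card_image_of_injective u Subtype.val_injective).symm
      _ ≤ ((Bfin m) \ (Bfin (m - 1))).card := Finset.card_le_card husub
      _ = (Bfin m).card - (Bfin (m - 1)).card := Finset.card_sdiff_of_subset hBsub
      _ = (2 * m + 1) ^ d - (2 * (m - 1) + 1) ^ d := by rw [hBcard, hBcard]
  -- pass to ℝ
  have hm0 : (0 : ℝ) < (m : ℝ) := by exact_mod_cast hm
  set a : ℝ := 2 * (m : ℝ) + 1 with ha
  set bb : ℝ := 2 * (m : ℝ) - 1 with hbb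
  have hmR : (1 : ℝ) ≤ m := by exact_mod_cast hm1
  have hb0 : 0 ≤ bb := by rw [hbb]; linarith
  have hba : bb ≤ a := by rw [ha, hbb]; linarith
  have hpowle : ((2 * (m - 1) + 1) ^ d : ℕ) ≤ ((2 * m + 1) ^ d : ℕ) :=
    Nat.pow_le_pow_left (by omega) d
  have hcastA : (((2 * m + 1) ^ d : ℕ) : ℝ) = a ^ d := by push_cast [ha]; ring
  have hcastB : (((2 * (m - 1) + 1) ^ d : ℕ) : ℝ) = bb ^ d := by
    have : ((m - 1 : ℕ) : ℝ) = (m : ℝ) - 1 := by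
      push_cast [Nat.cast_sub hm1]; ring
    push_cast [this, hbb]; ring
  have hcardR : (u.card : ℝ) ≤ a ^ d - bb ^ d := by
    calc (u.card : ℝ) ≤ (((2 * m + 1) ^ d - (2 * (m - 1) + 1) ^ d : ℕ) : ℝ) := by
          exact_mod_cast hucard
      _ = a ^ d - bb ^ d := by rw [Nat.cast_sub hpowle, hcastA, hcastB]
  have hkey : a ^ d - bb ^ d ≤ C * (m : ℝ) ^ (d - 1 : ℕ) := by
    calc a ^ d - bb ^ d ≤ d * (a - bb) * a ^ (d - 1) := pow_sub_pow_le_aux hb0 hba d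
      _ = 2 * d * a ^ (d - 1) := by rw [ha, hbb]; ring
      _ ≤ 2 * d * (3 * (m : ℝ)) ^ (d - 1) := by
          have h3m : a ≤ 3 * (m : ℝ) := by rw [ha]; linarith
          have := pow_le_pow_left₀ (by rw [ha]; positivity) h3m (d - 1)
          have h2d : (0 : ℝ) ≤ 2 * d := by positivity
          exact mul_le_mul_of_nonneg_left this h2d
      _ = C * (m : ℝ) ^ (d - 1 : ℕ) := by rw [hC, mul_pow]; ring
  have hms : (0 : ℝ) ≤ (m : ℝ) ^ (-s) := Real.rpow_nonneg hm0.le _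
  calc (u.card : ℝ) * (m : ℝ) ^ (-s) ≤ (C * (m : ℝ) ^ (d - 1 : ℕ)) * (m : ℝ) ^ (-s) := by
        exact mul_le_mul_of_nonneg_right (hcardR.trans hkey) hms
    _ = C * (m : ℝ) ^ t := by
        rw [mul_assoc, ← Real.rpow_natCast (m : ℝ) (d - 1), ← Real.rpow_add hm0]
        congr 2
        rw [ht, Nat.cast_sub hd1]
        push_cast
        ring

private lemma quad_cont {d : ℕ} (Q : QuadraticForm ℝ (Fin d → ℝ)) : Continuous Q := by
  let B := QuadraticMap.associated (R := ℝ) Q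
  let B' : (Fin d → ℝ) →ₗ[ℝ] ((Fin d → ℝ) →L[ℝ] ℝ) :=
    (LinearMap.toContinuousLinearMap :
      ((Fin d → ℝ) →ₗ[ℝ] ℝ) ≃ₗ[ℝ] ((Fin d → ℝ) →L[ℝ] ℝ)).toLinearMap.comp B
  have hB' : Continuous B' := B'.continuous_of_finiteDimensional
  have hcont : Continuous fun x => B' x x :=
    isBoundedBilinearMap_apply.continuous.comp (hB'.prodMk continuous_id)
  have hQB : ∀ x, Q x = B' x x := by
    intro x
    have := QuadraticMap.associated_eq_self_apply ℝ Q x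
    simpa [B', B] using this.symm
  exact (funext hQB : ⇑Q = fun x => B' x x) ▸ hcont

private lemma quad_lower_bound {d : ℕ} (Q : QuadraticForm ℝ (Fin d → ℝ)) (hQ : Q.PosDef) :
    ∃ ε : ℝ, 0 < ε ∧ ∀ c : Fin d → ℝ, ε * ‖c‖ ^ 2 ≤ Q c := by
  have hcont : Continuous Q := quad_cont Q
  by_cases hne : (Metric.sphere (0 : Fin d → ℝ) 1).Nonempty
  · obtain ⟨u, hu, hmin⟩ := (isCompact_sphere (0 : Fin d → ℝ) 1).exists_isMinOn hne
      hcont.continuousOn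
    have hu1 : ‖u‖ = 1 := by simpa using mem_sphere_zero_iff_norm.mp hu
    have hu0 : u ≠ 0 := fun h => by simp [h] at hu1
    refine ⟨Q u, hQ u hu0, fun c => ?_⟩
    by_cases hc : c = 0
    · simp [hc]
    · have hcn : (0 : ℝ) < ‖c‖ := norm_pos_iff.mpr hc
      set v : Fin d → ℝ := ‖c‖⁻¹ • c with hv
      have hvs : v ∈ Metric.sphere (0 : Fin d → ℝ) 1 := by
        rw [mem_sphere_zero_iff_norm, hv, norm_smul, norm_inv, norm_norm,
          inv_mul_cancel₀ hcn.ne']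
      have hQv : Q u ≤ Q v := hmin hvs
      have hsm : Q v = (‖c‖⁻¹ * ‖c‖⁻¹) * Q c := by
        rw [hv, QuadraticMap.map_smul, smul_eq_mul]
      have h2 : Q u * ‖c‖ ^ 2 ≤ Q v * ‖c‖ ^ 2 :=
        mul_le_mul_of_nonneg_right hQv (by positivity)
      calc Q u * ‖c‖ ^ 2 ≤ Q v * ‖c‖ ^ 2 := h2
        _ = Q c := by
            rw [hsm]
            field_simp
  · refine ⟨1, one_pos, fun c => ?_⟩
    have hc : c = 0 := by
      by_contra hc0
      exact hne ⟨‖c‖⁻¹ • c, by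
        rw [mem_sphere_zero_iff_norm, norm_smul, norm_inv, norm_norm,
          inv_mul_cancel₀ (norm_ne_zero_iff.mpr hc0)]⟩
    simp [hc]


/-- **Lemma 3.3.** If `Q` is a positive definite quadratic form on a real vector space `W`
of dimension `n` and `L` is a lattice in `W`, then `∑_{v ∈ L, v ≠ 0} Q(v)^{-k} < ∞`
whenever `2k > n`. -/
theorem summable_inv_rpow_of_posDef_quadraticForm
    {W : Type*} [AddCommGroup W] [Module ℝ W]
    (n : ℕ) (hn : Module.finrank ℝ W = n)
    (Q : QuadraticForm ℝ W) (hQ : Q.PosDef)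
    (L : Submodule ℤ W) (b : Module.Basis (Fin n) ℤ L)
    (hLspan : Submodule.span ℝ (L : Set W) = ⊤)
    (k : ℝ) (hk : (n : ℝ) < 2 * k) :
    Summable fun v : {x : L // x ≠ 0} => Q ((v : L) : W) ^ (-k) := by
  classical
  have hk0 : 0 < k := by
    have : (0 : ℝ) ≤ (n : ℝ) := Nat.cast_nonneg n
    linarith
  -- a real basis of W coming from the lattice basis
  have hcard : Fintype.card (Fin n) = Module.finrank ℝ W := by simp [hn]
  have hspanL : Submodule.span ℤ (Set.range fun i => ((b i : L) : W)) = L := by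
    have h1 : (Set.range fun i => ((b i : L) : W)) = L.subtype '' (Set.range b) := by
      rw [← Set.range_comp]
      rfl
    rw [h1, ← Submodule.map_span, b.span_eq, Submodule.map_subtype_top]
  have hsp : ⊤ ≤ Submodule.span ℝ (Set.range fun i => ((b i : L) : W)) := by
    rw [← Submodule.span_span_of_tower (R := ℤ) (S := ℝ), hspanL, hLspan]
  let bW : Module.Basis (Fin n) ℝ W :=
    basisOfTopLeSpanOfCardEqFinrank (fun i => ((b i : L) : W)) hsp hcard
  have hbW : ⇑bW = fun i => ((b i : L) : W) :=
    coe_basisOfTopLeSpanOfCardEqFinrank _ _ _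
  -- the pulled-back quadratic form on ℝ^n
  let Q' : QuadraticForm ℝ (Fin n → ℝ) :=
    Q.comp (bW.equivFun.symm : (Fin n → ℝ) ≃ₗ[ℝ] W).toLinearMap
  have hQ' : Q'.PosDef := by
    intro x hx
    exact hQ _ ((LinearEquiv.map_ne_zero_iff _).mpr hx)
  obtain ⟨ε, hε, hbound⟩ := quad_lower_bound Q' hQ'
  -- coordinates of lattice points
  have hrepr : ∀ v : L,
      bW.equivFun.symm (fun i => ((b.repr v i : ℤ) : ℝ)) = (v : W) := by
    intro v
    have hv : (∑ i, b.repr v i • ((b i : L) : W)) = (v : W) := by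
      have h := congrArg (L.subtype) (b.sum_repr v)
      simp only [map_sum, map_smul, Submodule.subtype_apply] at h
      exact h
    rw [Module.Basis.equivFun_symm_apply, ← hv]
    refine Finset.sum_congr rfl fun i _ => ?_
    rw [hbW]
    exact Int.cast_smul_eq_zsmul ℝ _ _
  have hQv : ∀ v : L,
      ε * ‖(fun i => ((b.repr v i : ℤ) : ℝ) : Fin n → ℝ)‖ ^ 2 ≤ Q (v : W) := by
    intro v
    have h1 := hbound (fun i => ((b.repr v i : ℤ) : ℝ))
    have h2 : Q' (fun i => ((b.repr v i : ℤ) : ℝ)) = Q (v : W) := by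
      show Q (bW.equivFun.symm _) = _
      rw [hrepr v]
    rwa [h2] at h1
  -- norms of integer vectors vs their real casts
  have hnormcast : ∀ y : Fin n → ℤ,
      ‖(fun i => ((y i : ℤ) : ℝ) : Fin n → ℝ)‖ = ‖y‖ := by
    intro y
    rw [Pi.norm_def, Pi.norm_def]
    congr 1
  -- the coordinate map is injective
  have hYinj : Function.Injective
      (fun v : {x : L // x ≠ 0} => (fun i => b.repr (v : L) i : Fin n → ℤ)) := by
    intro v w h
    apply Subtype.ext
    apply b.repr.injective
    exact Finsupp.ext fun i => congrFun h i
  have hsum0 : Summable fun x : Fin n → ℤ => ‖x‖ ^ (-(2 * k)) :=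
    summable_pi_int_norm_rpow n (by linarith)
  have hsumY : Summable
      (fun v : {x : L // x ≠ 0} =>
        ‖(fun i => b.repr (v : L) i : Fin n → ℤ)‖ ^ (-(2 * k))) := by
    simpa [Function.comp_def] using hsum0.comp_injective hYinj
  refine Summable.of_nonneg_of_le ?_ ?_ (hsumY.mul_left (ε ^ (-k)))
  · intro v
    have hvW : ((v : L) : W) ≠ 0 := fun h => v.2 (by exact_mod_cast h)
    exact Real.rpow_nonneg (hQ _ hvW).le _
  · intro v
    set c : Fin n → ℝ := fun i => ((b.repr (v : L) i : ℤ) : ℝ) with hc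
    have hvW : ((v : L) : W) ≠ 0 := fun h => v.2 (by exact_mod_cast h)
    have hcne : c ≠ 0 := by
      intro h0
      apply v.2
      apply b.repr.injective
      refine Finsupp.ext fun i => ?_
      have := congrFun h0 i
      simpa [hc] using this
    have hcpos : 0 < ‖c‖ := norm_pos_iff.mpr hcne
    have hεc : 0 < ε * ‖c‖ ^ 2 := by positivity
    have hle : ε * ‖c‖ ^ 2 ≤ Q ((v : L) : W) := hQv (v : L)
    have step1 : Q ((v : L) : W) ^ (-k) ≤ (ε * ‖c‖ ^ 2) ^ (-k) :=
      Real.rpow_le_rpow_of_nonpos hεc hle (by linarith)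
    have step2 : (ε * ‖c‖ ^ 2) ^ (-k) = ε ^ (-k) * (‖c‖ ^ 2) ^ (-k) :=
      Real.mul_rpow hε.le (sq_nonneg _)
    have step3 : (‖c‖ ^ 2) ^ (-k) = ‖c‖ ^ (-(2 * k)) := by
      rw [← Real.rpow_natCast ‖c‖ 2, ← Real.rpow_mul (norm_nonneg _)]
      norm_num
    have step4 : ‖c‖ = ‖(fun i => b.repr (v : L) i : Fin n → ℤ)‖ := hnormcast _
    calc Q ((v : L) : W) ^ (-k) ≤ (ε * ‖c‖ ^ 2) ^ (-k) := step1
      _ = ε ^ (-k) * ‖c‖ ^ (-(2 * k)) := by rw [step2, step3]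
      _ = ε ^ (-k) * ‖(fun i => b.repr (v : L) i : Fin n → ℤ)‖ ^ (-(2 * k)) := by
          rw [step4]
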